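/- Suppose the weights {w_{p,i}} (all of multiplicity one) satisfy the genericity condition: for all integers n_{p,i} with |n_{p,i}| ≤ N (where N > ∑ n_i), if ∑ n_{p,i} w_{p,i} ∈ Z then all n_{p,i} = 0. Then for any two parabolic bundles G' = ⊕E'_i and G = ⊕E_i arising from a proper subchain E'_• of a chain E_• of rank vector (n_i), one has parμ(⊕E'_i) ≠ parμ(⊕E_i); consequently there are no α-independent strictly semistable parabolic chains of rank (n_0,...,n_r). -/
import Mathlib


/-!
STATEMENT 14: Under the genericity assumption on the weights (all of multiplicity
one): for all integer vectors `(n_{p,i})` with `|n_{p,i}| ≤ N` (where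
`N > ∑ n_i` = the total rank), `∑ n_{p,i} w_{p,i} ∈ ℤ` implies all `n_{p,i} = 0`,
there are no α-independent strictly semistable parabolic chains of rank
`(n_0,...,n_r)`: for any proper subchain `E'_•` of a chain `E_•` one has
`parμ(⊕E'_i) ≠ parμ(⊕E_i)`.

Encoding: `ι` indexes the collection of all the weights of the chain `E_•`
together; since all weights have multiplicity one, `⊕ E_i` carries the set `S` of
weights with `|S| = ∑ n_i` (the total rank), while the proper subchain carries a
nonempty proper subset `S' ⊊ S` of weights, `|S'|` being its total rank.  With
`d, d'` the total degrees, `parμ(⊕E_i) = (d + ∑_{i∈S} w_i)/|S|` and similarly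
for `E'_•`; the conclusion is that these two slopes differ.
-/

open Finset

theorem no_alpha_independent_semistable
    (ι : Type*) [Fintype ι] [DecidableEq ι]
    (w : ι → ℝ) (N : ℕ)
    (S' S : Finset ι)
    (hsub : S' ⊂ S)            -- E'_• is a proper subchain of E_•
    (hne : S'.Nonempty)        -- E'_• is nonzero
    (hN : S.card < N)          -- N is larger than the total rank ∑ n_i
    -- genericity of the weights:
    (hgen : ∀ nc : ι → ℤ, (∀ i, |nc i| ≤ (N : ℤ)) →
      (∃ z : ℤ, ∑ i, (nc i : ℝ) * w i = (z : ℝ)) → ∀ i, nc i = 0)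
    (d' d : ℤ) :               -- total degrees of ⊕E'_i and ⊕E_i
    ((d' : ℝ) + ∑ i ∈ S', w i) / (S'.card : ℝ) ≠
      ((d : ℝ) + ∑ i ∈ S, w i) / (S.card : ℝ) := by
  intro heq
  have hc' : 0 < S'.card := Finset.card_pos.mpr hne
  have hle : S'.card ≤ S.card := Finset.card_le_card hsub.subset
  have hc : 0 < S.card := lt_of_lt_of_le hc' hle
  -- cross multiply
  have hcross : ((d' : ℝ) + ∑ i ∈ S', w i) * (S.card : ℝ)
      = ((d : ℝ) + ∑ i ∈ S, w i) * (S'.card : ℝ) := by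
    have h1 : (S'.card : ℝ) ≠ 0 := by positivity
    have h2 : (S.card : ℝ) ≠ 0 := by positivity
    exact (div_eq_div_iff h1 h2).mp heq
  set nc : ι → ℤ := fun i =>
    (if i ∈ S' then (S.card : ℤ) else 0) - (if i ∈ S then (S'.card : ℤ) else 0) with hnc
  have hbound : ∀ i, |nc i| ≤ (N : ℤ) := by
    intro i
    simp only [hnc]
    by_cases h1 : i ∈ S' <;> by_cases h2 : i ∈ S <;> simp [h1, h2, abs_le] <;> omega
  have hsum : ∑ i, (nc i : ℝ) * w i = ((S'.card : ℤ) * d - (S.card : ℤ) * d' : ℤ) := by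
    have e1 : ∑ i, (nc i : ℝ) * w i
        = (S.card : ℝ) * ∑ i ∈ S', w i - (S'.card : ℝ) * ∑ i ∈ S, w i := by
      simp only [hnc]
      push_cast
      simp only [sub_mul, Finset.sum_sub_distrib, ite_mul, zero_mul,
        Finset.sum_ite_mem, Finset.univ_inter, Finset.mul_sum]
    rw [e1]
    push_cast
    nlinarith [hcross]
  have hzero := hgen nc hbound ⟨_, hsum⟩
  obtain ⟨i, hiS, hiS'⟩ := Finset.exists_of_ssubset hsub
  have := hzero i
  simp only [hnc, if_neg hiS', if_pos hiS] at this
  omega
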